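/- Let ρ and σ be d×d density matrices with σ positive definite with smallest eigenvalue β = λ_min(σ), suppose the support of ρ is contained in the support of σ, and let T = ‖ρ − σ‖₁/2. If T ≥ β, then S(ρ‖σ) ≤ (β + T)·log(1 + T/β). -/

import Mathlib

open Matrix MeasureTheory
open scoped ComplexOrder

/-- Matrix logarithm on the support: apply `Real.log` (which is `0` at `0`) to the
eigenvalues of a Hermitian matrix via functional calculus; junk value `0` otherwise. -/
noncomputable def mlog {n : Type*} [Fintype n] [DecidableEq n] (A : Matrix n n ℂ) :
    Matrix n n ℂ :=
  if hA : A.IsHermitian then hA.cfc Real.log else 0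

/-- Quantum relative entropy `S(A‖B) = Tr A (log A - log B)`. -/
noncomputable def qRelEnt {n : Type*} [Fintype n] [DecidableEq n] (A B : Matrix n n ℂ) : ℝ :=
  ((A * (mlog A - mlog B)).trace).re

/-- The square root of a positive semidefinite matrix, as defined in the older Mathlib
(`Matrix.PosSemidef.sqrt`, since removed). -/
noncomputable def Matrix.PosSemidef.sqrt {n : Type*} [Fintype n] [DecidableEq n]
    {A : Matrix n n ℂ} (hA : A.PosSemidef) : Matrix n n ℂ :=
  hA.1.eigenvectorUnitary.1 * diagonal ((↑) ∘ (√·) ∘ hA.1.eigenvalues) *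
  (star hA.1.eigenvectorUnitary : Matrix n n ℂ)

theorem Matrix.PosSemidef.posSemidef_sqrt {n : Type*} [Fintype n] [DecidableEq n]
    {A : Matrix n n ℂ} (hA : A.PosSemidef) : PosSemidef hA.sqrt := by
  apply PosSemidef.mul_mul_conjTranspose_same
  refine posSemidef_diagonal_iff.mpr fun i ↦ ?_
  simp only [Function.comp_apply]
  exact_mod_cast Real.sqrt_nonneg _

/-- Trace norm `‖X‖₁ = Tr √(Xᴴ X)`. -/
noncomputable def traceNorm {n : Type*} [Fintype n] [DecidableEq n] (X : Matrix n n ℂ) : ℝ :=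
  ((Matrix.posSemidef_conjTranspose_mul_self X).sqrt.trace).re

/-- Smallest eigenvalue of a Hermitian matrix (junk value `0` otherwise). -/
noncomputable def lamMin {n : Type*} [Fintype n] [DecidableEq n] (A : Matrix n n ℂ) : ℝ :=
  if hA : A.IsHermitian then ⨅ i, hA.eigenvalues i else 0

/-- Largest eigenvalue of a Hermitian matrix (junk value `0` otherwise). -/
noncomputable def lamMax {n : Type*} [Fintype n] [DecidableEq n] (A : Matrix n n ℂ) : ℝ :=
  if hA : A.IsHermitian then ⨆ i, hA.eigenvalues i else 0

/-- Operator norm: largest eigenvalue of `√(Xᴴ X)` (largest singular value). -/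
noncomputable def opNorm {n : Type*} [Fintype n] [DecidableEq n] (X : Matrix n n ℂ) : ℝ :=
  ⨆ i, (Matrix.posSemidef_conjTranspose_mul_self X).posSemidef_sqrt.1.eigenvalues i

open Filter

variable {n : Type*} [Fintype n] [DecidableEq n]

structure IsED (A : Matrix n n ℂ) (V : Matrix n n ℂ) (g : n → ℝ) : Prop where
  hV1 : V * Vᴴ = 1
  hV2 : Vᴴ * V = 1
  hA : A = V * Matrix.diagonal (fun i => (g i : ℂ)) * Vᴴ

namespace IsED
variable {A V : Matrix n n ℂ} {g : n → ℝ}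

lemma isHermitian (h : IsED A V g) : A.IsHermitian := by
  rw [Matrix.IsHermitian, h.hA]
  simp only [Matrix.conjTranspose_mul, Matrix.conjTranspose_conjTranspose,
    Matrix.diagonal_conjTranspose]
  rw [mul_assoc]
  congr 2
  ext i j
  simp [Pi.star_def]

lemma add_smul_one (h : IsED A V g) (ε : ℝ) :
    IsED (A + (ε : ℂ) • 1) V (fun i => g i + ε) := by
  refine ⟨h.hV1, h.hV2, ?_⟩
  have hd : Matrix.diagonal (fun i => ((g i + ε : ℝ) : ℂ))
      = Matrix.diagonal (fun i => (g i : ℂ)) + (ε : ℂ) • 1 := by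
    ext i j
    by_cases hij : i = j <;>
      simp [Matrix.diagonal_apply, hij, Matrix.one_apply] <;> push_cast <;> ring
  rw [hd, mul_add, add_mul, ← h.hA]
  congr 1
  rw [Matrix.mul_smul, Matrix.smul_mul, mul_one, h.hV1]

lemma smul (h : IsED A V g) (γ : ℝ) : IsED ((γ : ℂ) • A) V (fun i => γ * g i) := by
  refine ⟨h.hV1, h.hV2, ?_⟩
  have hd : Matrix.diagonal (fun i => ((γ * g i : ℝ) : ℂ))
      = (γ : ℂ) • Matrix.diagonal (fun i => (g i : ℂ)) := by
    ext i j
    by_cases hij : i = j <;> simp [Matrix.diagonal_apply, hij] <;> push_cast <;> ring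
  rw [h.hA]
  push_cast at hd ⊢
  rw [hd, Matrix.mul_smul, Matrix.smul_mul]

lemma form (h : IsED A V g) (v : n → ℂ) :
    star v ⬝ᵥ A *ᵥ v = ∑ i, (g i : ℂ) * Complex.normSq ((Vᴴ *ᵥ v) i) := by
  rw [h.hA]
  set w := Vᴴ *ᵥ v with hw
  have h1 : (V * Matrix.diagonal (fun i => (g i : ℂ)) * Vᴴ) *ᵥ v
      = V *ᵥ (Matrix.diagonal (fun i => (g i : ℂ)) *ᵥ w) := by
    rw [hw, ← Matrix.mulVec_mulVec, ← Matrix.mulVec_mulVec]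
  have h2 : star v ᵥ* V = star w := by
    rw [hw, Matrix.star_mulVec, Matrix.conjTranspose_conjTranspose]
  rw [h1, Matrix.dotProduct_mulVec, h2]
  simp only [dotProduct, Matrix.mulVec_diagonal, Pi.star_apply]
  refine Finset.sum_congr rfl fun i _ => ?_
  have : star (w i) * ((g i : ℂ) * w i) = (g i : ℂ) * (star (w i) * w i) := by ring
  rw [this, Complex.star_def, ← Complex.normSq_eq_conj_mul_self]

lemma trace (h : IsED A V g) : A.trace = ∑ i, (g i : ℂ) := by
  rw [h.hA, Matrix.trace_mul_cycle, h.hV2, one_mul, Matrix.trace_diagonal]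

lemma re_form (h : IsED A V g) (v : n → ℂ) :
    (star v ⬝ᵥ A *ᵥ v).re = ∑ i, g i * Complex.normSq ((Vᴴ *ᵥ v) i) := by
  rw [h.form v, Complex.re_sum]
  refine Finset.sum_congr rfl fun i _ => ?_
  rw [← Complex.ofReal_mul, Complex.ofReal_re]

lemma posSemidef (h : IsED A V g) (hg : ∀ i, 0 ≤ g i) : A.PosSemidef := by
  refine Matrix.PosSemidef.of_dotProduct_mulVec_nonneg h.isHermitian fun v => ?_
  rw [h.form v]
  have : ∀ i ∈ Finset.univ, 0 ≤ (g i : ℂ) * Complex.normSq ((Vᴴ *ᵥ v) i) := by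
    intro i _
    have h1 : (0:ℝ) ≤ g i * Complex.normSq ((Vᴴ *ᵥ v) i) :=
      mul_nonneg (hg i) (Complex.normSq_nonneg _)
    rw [← Complex.ofReal_mul]
    exact_mod_cast Complex.zero_le_real.mpr h1
  exact Finset.sum_nonneg this

lemma posDef (h : IsED A V g) (hg : ∀ i, 0 < g i) : A.PosDef := by
  refine Matrix.PosDef.of_dotProduct_mulVec_pos h.isHermitian fun v hv => ?_
  rw [h.form v]
  have hsum : (∑ i, (g i : ℂ) * Complex.normSq ((Vᴴ *ᵥ v) i))
      = ((∑ i, g i * Complex.normSq ((Vᴴ *ᵥ v) i) : ℝ) : ℂ) := by push_cast; ring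
  have hw : Vᴴ *ᵥ v ≠ 0 := by
    intro hcon
    apply hv
    have : V *ᵥ (Vᴴ *ᵥ v) = v := by
      rw [Matrix.mulVec_mulVec, h.hV1, Matrix.one_mulVec]
    rw [hcon, Matrix.mulVec_zero] at this
    exact this.symm
  obtain ⟨i0, hi0⟩ : ∃ i, (Vᴴ *ᵥ v) i ≠ 0 := Function.ne_iff.mp hw
  rw [hsum, Complex.zero_lt_real]
  refine Finset.sum_pos' (fun i _ => mul_nonneg (hg i).le (Complex.normSq_nonneg _))
    ⟨i0, Finset.mem_univ i0, mul_pos (hg i0) (Complex.normSq_pos.mpr hi0)⟩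

lemma sandwich_mul {V : Matrix n n ℂ} (hV2 : Vᴴ * V = 1) (B C : Matrix n n ℂ) :
    (V * B * Vᴴ) * (V * C * Vᴴ) = V * (B * C) * Vᴴ := by
  have h2 : Vᴴ * (V * (C * Vᴴ)) = C * Vᴴ := by rw [← mul_assoc, hV2, one_mul]
  calc (V * B * Vᴴ) * (V * C * Vᴴ) = V * (B * (Vᴴ * (V * (C * Vᴴ)))) := by
        simp only [mul_assoc]
    _ = V * (B * (C * Vᴴ)) := by rw [h2]
    _ = V * (B * C) * Vᴴ := by simp only [mul_assoc]

lemma inv (h : IsED A V g) (hg : ∀ i, g i ≠ 0) :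
    IsED A⁻¹ V (fun i => (g i)⁻¹) := by
  refine ⟨h.hV1, h.hV2, ?_⟩
  have hinv : A * (V * Matrix.diagonal (fun i => (((g i)⁻¹ : ℝ) : ℂ)) * Vᴴ) = 1 := by
    rw [h.hA, sandwich_mul h.hV2, Matrix.diagonal_mul_diagonal]
    have : (fun i => (g i : ℂ) * (((g i)⁻¹ : ℝ) : ℂ)) = fun _ => (1:ℂ) := by
      ext i
      rw [← Complex.ofReal_mul, mul_inv_cancel₀ (hg i), Complex.ofReal_one]
    rw [this, Matrix.diagonal_one, mul_one, h.hV1]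
  rw [Matrix.inv_eq_right_inv hinv]

end IsED

lemma isED_canon {A : Matrix n n ℂ} (hA : A.IsHermitian) :
    IsED A (hA.eigenvectorUnitary : Matrix n n ℂ) hA.eigenvalues := by
  refine ⟨?_, ?_, ?_⟩
  · simpa [Matrix.star_eq_conjTranspose] using (Unitary.mul_star_self_of_mem hA.eigenvectorUnitary.2)
  · simpa [Matrix.star_eq_conjTranspose] using (Unitary.star_mul_self_of_mem hA.eigenvectorUnitary.2)
  · simpa [Matrix.star_eq_conjTranspose, Function.comp_def] using hA.spectral_theorem

lemma isED_sqrt {A : Matrix n n ℂ} (hA : A.PosSemidef) :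
    IsED hA.sqrt (hA.1.eigenvectorUnitary : Matrix n n ℂ)
      (fun i => Real.sqrt (hA.1.eigenvalues i)) :=
  ⟨(isED_canon hA.1).hV1, (isED_canon hA.1).hV2, rfl⟩

lemma psd_sqrt_mul_self {A : Matrix n n ℂ} (hA : A.PosSemidef) : hA.sqrt * hA.sqrt = A := by
  have e := isED_sqrt hA
  rw [e.hA, IsED.sandwich_mul e.hV2, Matrix.diagonal_mul_diagonal]
  have hf : (fun i => ((Real.sqrt (hA.1.eigenvalues i) : ℝ) : ℂ) *
      ((Real.sqrt (hA.1.eigenvalues i) : ℝ) : ℂ)) = fun i => ((hA.1.eigenvalues i : ℝ) : ℂ) := by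
    funext i
    rw [← Complex.ofReal_mul, Real.mul_self_sqrt (hA.eigenvalues_nonneg i)]
  rw [hf]
  exact (isED_canon hA.1).hA.symm

/-- applying a function through any eigendecomposition commutation trick -/
lemma fun_ED_indep {A V W : Matrix n n ℂ} {g e : n → ℝ} (h1 : IsED A V g) (h2 : IsED A W e)
    (f : ℝ → ℝ) :
    V * Matrix.diagonal (fun i => (f (g i) : ℂ)) * Vᴴ
      = W * Matrix.diagonal (fun i => (f (e i) : ℂ)) * Wᴴ := by
  set S : Matrix n n ℂ := Vᴴ * W with hS
  have e0 : V * Matrix.diagonal (fun i => (g i : ℂ)) * Vᴴ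
      = W * Matrix.diagonal (fun i => (e i : ℂ)) * Wᴴ := h1.hA.symm.trans h2.hA
  have hdiag : Matrix.diagonal (fun i => (g i : ℂ)) * S
      = S * Matrix.diagonal (fun i => (e i : ℂ)) := by
    calc Matrix.diagonal (fun i => (g i : ℂ)) * S
        = (Vᴴ * V) * Matrix.diagonal (fun i => (g i : ℂ)) * (Vᴴ * W) := by
          rw [h1.hV2, one_mul, hS]
      _ = Vᴴ * (V * Matrix.diagonal (fun i => (g i : ℂ)) * Vᴴ) * W := by
          simp only [mul_assoc]
      _ = Vᴴ * (W * Matrix.diagonal (fun i => (e i : ℂ)) * Wᴴ) * W := by rw [e0]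
      _ = (Vᴴ * W) * Matrix.diagonal (fun i => (e i : ℂ)) * (Wᴴ * W) := by
          simp only [mul_assoc]
      _ = S * Matrix.diagonal (fun i => (e i : ℂ)) := by rw [h2.hV2, hS, mul_one]
  have hcomm : Matrix.diagonal (fun i => (f (g i) : ℂ)) * S
      = S * Matrix.diagonal (fun i => (f (e i) : ℂ)) := by
    ext i j
    have hij := congrArg (fun M => M i j) hdiag
    simp only [Matrix.diagonal_mul, Matrix.mul_diagonal] at hij ⊢
    by_cases hs : S i j = 0
    · simp [hs]
    · have : (g i : ℂ) = (e j : ℂ) := by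
        have := hij
        rw [mul_comm (S i j) _] at this
        exact mul_right_cancel₀ hs this
      have hge : g i = e j := by exact_mod_cast this
      rw [hge, mul_comm]
  calc V * Matrix.diagonal (fun i => (f (g i) : ℂ)) * Vᴴ
      = V * (Matrix.diagonal (fun i => (f (g i) : ℂ)) * S) * (Wᴴ) := by
        rw [hS]
        have : Vᴴ = (Vᴴ * W) * Wᴴ := by rw [mul_assoc, h2.hV1, mul_one]
        conv_lhs => rw [this]
        simp only [mul_assoc]
    _ = (V * S) * Matrix.diagonal (fun i => (f (e i) : ℂ)) * Wᴴ := by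
        rw [hcomm]; simp only [mul_assoc]
    _ = W * Matrix.diagonal (fun i => (f (e i) : ℂ)) * Wᴴ := by
        rw [hS, ← mul_assoc, h1.hV1, one_mul]

lemma mlog_eq_of_isED {A V : Matrix n n ℂ} {g : n → ℝ} (h : IsED A V g) :
    mlog A = V * Matrix.diagonal (fun i => (Real.log (g i) : ℂ)) * Vᴴ := by
  have hH : A.IsHermitian := h.isHermitian
  rw [mlog, dif_pos hH]
  have : hH.cfc Real.log = (hH.eigenvectorUnitary : Matrix n n ℂ) *
      Matrix.diagonal (fun i => (Real.log (hH.eigenvalues i) : ℂ)) *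
      (hH.eigenvectorUnitary : Matrix n n ℂ)ᴴ := by
    rw [Matrix.IsHermitian.cfc]
    rfl
  rw [this, fun_ED_indep (isED_canon hH) h Real.log]


lemma trace_diagonal_mul (g : n → ℝ) (M : Matrix n n ℂ) :
    (Matrix.diagonal (fun i => (g i : ℂ)) * M).trace = ∑ i, (g i : ℂ) * M i i := by
  simp [Matrix.trace, Matrix.diag, Matrix.diagonal_mul]

lemma trace_mul_ED {A V B W : Matrix n n ℂ} {g e : n → ℝ}
    (h1 : IsED A V g) (h2 : IsED B W e) :
    (A * B).trace = ∑ i, ∑ j, (g i : ℂ) * (e j : ℂ) * Complex.normSq ((Vᴴ * W) i j) := by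
  set S := Vᴴ * W with hS
  have hWV : Wᴴ * V = Sᴴ := by
    rw [hS, Matrix.conjTranspose_mul, Matrix.conjTranspose_conjTranspose]
  have e1 : A * B = V * (Matrix.diagonal (fun i => (g i:ℂ)) *
      (S * (Matrix.diagonal (fun i => (e i:ℂ)) * Wᴴ))) := by
    rw [h1.hA, h2.hA, hS]; simp only [mul_assoc]
  rw [e1, Matrix.trace_mul_comm]
  have e2 : Matrix.diagonal (fun i => (g i:ℂ)) *
      (S * (Matrix.diagonal (fun i => (e i:ℂ)) * Wᴴ)) * V
      = Matrix.diagonal (fun i => (g i:ℂ)) *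
      (S * (Matrix.diagonal (fun i => (e i:ℂ)) * Sᴴ)) := by
    rw [← hWV]; simp only [mul_assoc]
  rw [e2, trace_diagonal_mul]
  refine Finset.sum_congr rfl fun i _ => ?_
  have h3 : (S * ((Matrix.diagonal fun i => (e i:ℂ)) * Sᴴ)) i i
      = ∑ j, S i j * ((e j : ℂ) * star (S i j)) := by
    rw [Matrix.mul_apply]
    refine Finset.sum_congr rfl fun j _ => ?_
    rw [Matrix.diagonal_mul, Matrix.conjTranspose_apply]
  rw [h3, Finset.mul_sum]
  refine Finset.sum_congr rfl fun j _ => ?_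
  rw [Complex.star_def]
  have h4 : S i j * ((e j:ℂ) * (starRingEnd ℂ) (S i j))
      = (e j:ℂ) * (S i j * (starRingEnd ℂ) (S i j)) := by ring
  rw [h4, Complex.mul_conj]
  ring

lemma psd_of_herm_form {H : Matrix n n ℂ} (hH : H.IsHermitian)
    (hf : ∀ v, 0 ≤ Complex.re (star v ⬝ᵥ H *ᵥ v)) : H.PosSemidef := by
  refine Matrix.PosSemidef.of_dotProduct_mulVec_nonneg hH fun v => ?_
  have h1 : star (star v ⬝ᵥ H *ᵥ v) = star (H *ᵥ v) ⬝ᵥ v := by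
    rw [Matrix.star_dotProduct, star_star]
  have h2 : star (H *ᵥ v) ⬝ᵥ v = (star v ᵥ* Hᴴ) ⬝ᵥ v := by rw [Matrix.star_mulVec]
  have h3 : (star v ᵥ* Hᴴ) ⬝ᵥ v = star v ⬝ᵥ Hᴴ *ᵥ v := by
    rw [← Matrix.dotProduct_mulVec]
  have hconj : star (star v ⬝ᵥ H *ᵥ v) = star v ⬝ᵥ H *ᵥ v := by
    rw [h1, h2, h3, hH.eq]
  have him : (star v ⬝ᵥ H *ᵥ v).im = 0 := by
    have := congrArg Complex.im hconj
    simp at this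
    linarith
  rw [Complex.le_def]
  exact ⟨by simpa using hf v, by simp [him]⟩

lemma star_single_one (i : n) :
    star ((Pi.single i (1:ℂ)) : n → ℂ) = ((Pi.single i (1:ℂ)) : n → ℂ) := by
  funext x
  by_cases h : x = i <;> simp [Pi.single_apply, h]

lemma trace_re_nonneg_of_psd {M : Matrix n n ℂ} (hM : M.PosSemidef) : 0 ≤ M.trace.re := by
  have : ∀ i, 0 ≤ (M i i).re := by
    intro i
    have h := hM.re_dotProduct_nonneg (Pi.single i 1)
    have he : star (Pi.single i (1:ℂ)) ⬝ᵥ M *ᵥ Pi.single i 1 = M i i := by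
      rw [star_single_one, single_dotProduct, one_mul, Matrix.mulVec_single]
      simp
    rwa [he] at h
  calc (0:ℝ) ≤ ∑ i, (M i i).re := Finset.sum_nonneg fun i _ => this i
    _ = M.trace.re := by rw [Matrix.trace]; simp [Matrix.diag, Complex.re_sum]

lemma trace_mul_re_nonneg {A B : Matrix n n ℂ} (hA : A.PosSemidef) (hB : B.PosSemidef) :
    0 ≤ ((A * B).trace).re := by
  have hsherm := hB.posSemidef_sqrt.isHermitian
  have e2 : ((A * B).trace) = ((hB.sqrt * A * hB.sqrt).trace) := by
    conv_lhs => rw [← psd_sqrt_mul_self hB]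
    rw [← mul_assoc, Matrix.trace_mul_comm, ← mul_assoc]
  rw [e2]
  have := hA.mul_mul_conjTranspose_same hB.sqrt
  rw [hsherm.eq] at this
  exact trace_re_nonneg_of_psd this

lemma inv_form_antitone {M N : Matrix n n ℂ} (hM : M.PosDef) (hN : N.PosDef)
    (hMN : (N - M).PosSemidef) (v : n → ℂ) :
    (star v ⬝ᵥ N⁻¹ *ᵥ v).re ≤ (star v ⬝ᵥ M⁻¹ *ᵥ v).re := by
  have hMdet := (Matrix.isUnit_iff_isUnit_det M).mp hM.isUnit
  have hNdet := (Matrix.isUnit_iff_isUnit_det N).mp hN.isUnit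
  have hMM : M * M⁻¹ = 1 := Matrix.mul_nonsing_inv M hMdet
  have hMM' : M⁻¹ * M = 1 := Matrix.nonsing_inv_mul M hMdet
  have hNN : N * N⁻¹ = 1 := Matrix.mul_nonsing_inv N hNdet
  have hMinvH : (M⁻¹).IsHermitian := hM.inv.isHermitian
  have hNinvH : (N⁻¹).IsHermitian := hN.inv.isHermitian
  set w : n → ℂ := N⁻¹ *ᵥ v with hw
  have hNw : N *ᵥ w = v := by
    rw [hw, Matrix.mulVec_mulVec, hNN, Matrix.one_mulVec]
  have starinv : ∀ (K : Matrix n n ℂ), K.IsHermitian → star (K *ᵥ v) = star v ᵥ* K := by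
    intro K hK
    rw [Matrix.star_mulVec, hK.eq]
  have hb : star v ⬝ᵥ N⁻¹ *ᵥ v = star w ⬝ᵥ v := by
    rw [Matrix.dotProduct_mulVec, ← starinv _ hNinvH, hw]
  have hbN : star w ⬝ᵥ N *ᵥ w = star w ⬝ᵥ v := by rw [hNw]
  set u : n → ℂ := M⁻¹ *ᵥ v - w with hu
  have hMu : M *ᵥ u = v - M *ᵥ w := by
    rw [hu, Matrix.mulVec_sub, Matrix.mulVec_mulVec, hMM, Matrix.one_mulVec]
  have st1 : star (M⁻¹ *ᵥ v) ⬝ᵥ v = star v ⬝ᵥ M⁻¹ *ᵥ v := by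
    rw [starinv _ hMinvH, ← Matrix.dotProduct_mulVec]
  have st2 : star (M⁻¹ *ᵥ v) ⬝ᵥ (M *ᵥ w) = star v ⬝ᵥ w := by
    rw [starinv _ hMinvH, ← Matrix.dotProduct_mulVec, Matrix.mulVec_mulVec, hMM',
      Matrix.one_mulVec]
  have st3 : (star v ⬝ᵥ w).re = (star w ⬝ᵥ v).re := by
    have : star w ⬝ᵥ v = star (star v ⬝ᵥ w) := by
      rw [Matrix.star_dotProduct]
    rw [this, Complex.star_def, Complex.conj_re]
  have expand : star u ⬝ᵥ M *ᵥ u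
      = star (M⁻¹ *ᵥ v) ⬝ᵥ v - star (M⁻¹ *ᵥ v) ⬝ᵥ (M *ᵥ w)
        - (star w ⬝ᵥ v - star w ⬝ᵥ (M *ᵥ w)) := by
    rw [hMu, hu, star_sub, sub_dotProduct, dotProduct_sub,
      dotProduct_sub]
  have hMpsd := hM.posSemidef
  have h1 : 0 ≤ (star u ⬝ᵥ M *ᵥ u).re := hMpsd.re_dotProduct_nonneg u
  have h2 : 0 ≤ (star w ⬝ᵥ (N - M) *ᵥ w).re := hMN.re_dotProduct_nonneg w
  have h2' : (star w ⬝ᵥ M *ᵥ w).re ≤ (star w ⬝ᵥ v).re := by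
    rw [Matrix.sub_mulVec, dotProduct_sub, Complex.sub_re] at h2
    rw [hbN] at h2
    linarith
  rw [expand, st1, st2] at h1
  simp only [Complex.sub_re] at h1
  rw [hb]
  rw [st3] at h1
  linarith

-- scalar lemma standalone
lemma sum_log_le_sum_log {ι κ : Type*} [Fintype ι] [Fintype κ]
    (lam wt : ι → ℝ) (mu ut : κ → ℝ)
    (hlam : ∀ i, 0 < lam i) (hmu : ∀ j, 0 < mu j)
    (hsum : ∑ i, wt i = ∑ j, ut j)
    (hineq : ∀ s : ℝ, 0 ≤ s → ∑ j, ut j * (mu j + s)⁻¹ ≤ ∑ i, wt i * (lam i + s)⁻¹) :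
    ∑ i, wt i * Real.log (lam i) ≤ ∑ j, ut j * Real.log (mu j) := by
  set G : ℝ → ℝ := fun s => ∑ i, wt i * Real.log (lam i + s)
      - ∑ j, ut j * Real.log (mu j + s) with hG
  have hd : ∀ s : ℝ, 0 ≤ s → HasDerivAt G
      (∑ i, wt i * (lam i + s)⁻¹ - ∑ j, ut j * (mu j + s)⁻¹) s := by
    intro s hs
    have t1 : ∀ (x : ℝ), 0 < x → HasDerivAt (fun s : ℝ => Real.log (x + s)) (x + s)⁻¹ s := by
      intro x hx
      have h0 : HasDerivAt (fun s : ℝ => x + s) 1 s := (hasDerivAt_id s).const_add x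
      have := h0.log (by positivity)
      simpa using this
    have hsum1 : HasDerivAt (fun s => ∑ i, wt i * Real.log (lam i + s))
        (∑ i, wt i * (lam i + s)⁻¹) s := by
      apply HasDerivAt.fun_sum
      intro i _
      exact (t1 (lam i) (hlam i)).const_mul (wt i)
    have hsum2 : HasDerivAt (fun s => ∑ j, ut j * Real.log (mu j + s))
        (∑ j, ut j * (mu j + s)⁻¹) s := by
      apply HasDerivAt.fun_sum
      intro j _
      exact (t1 (mu j) (hmu j)).const_mul (ut j)
    exact hsum1.sub hsum2
  have mono : MonotoneOn G (Set.Ici 0) := by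
    apply monotoneOn_of_deriv_nonneg (convex_Ici 0)
    · intro s hs
      exact (hd s hs).continuousAt.continuousWithinAt
    · intro s hs
      rw [interior_Ici] at hs
      exact (hd s (le_of_lt hs)).differentiableAt.differentiableWithinAt
    · intro s hs
      rw [interior_Ici] at hs
      rw [(hd s (le_of_lt hs)).deriv]
      have := hineq s (le_of_lt hs)
      linarith
  have hquot : ∀ x : ℝ, 0 < x →
      Tendsto (fun s : ℝ => Real.log (x + s) - Real.log (1 + s)) atTop (nhds 0) := by
    intro x hx
    have h1 : Tendsto (fun s : ℝ => (x + s) / (1 + s)) atTop (nhds 1) := by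
      have h2 : Tendsto (fun s : ℝ => 1 + (x - 1) / (1 + s)) atTop (nhds 1) := by
        have h3 : Tendsto (fun s : ℝ => (x - 1) / (1 + s)) atTop (nhds 0) :=
          Tendsto.div_atTop tendsto_const_nhds (tendsto_atTop_add_const_left _ _ tendsto_id)
        simpa using tendsto_const_nhds.add h3
      apply h2.congr'
      filter_upwards [eventually_gt_atTop (0:ℝ)] with s hs
      field_simp
      ring
    have h4 : Tendsto (fun s : ℝ => Real.log ((x + s) / (1 + s))) atTop (nhds 0) := by
      have := (Real.continuousAt_log (by norm_num : (1:ℝ) ≠ 0)).tendsto.comp h1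
      rw [Real.log_one] at this
      exact this
    apply h4.congr'
    filter_upwards [eventually_gt_atTop (0:ℝ)] with s hs
    rw [Real.log_div (by positivity) (by positivity)]
  have hT : Tendsto G atTop (nhds 0) := by
    have hGs : ∀ s : ℝ, G s = ∑ i, wt i * (Real.log (lam i + s) - Real.log (1 + s))
        - ∑ j, ut j * (Real.log (mu j + s) - Real.log (1 + s)) := by
      intro s
      rw [hG]
      simp only [mul_sub, Finset.sum_sub_distrib, ← Finset.sum_mul]
      rw [hsum]
      ring
    rw [show G = fun s => ∑ i, wt i * (Real.log (lam i + s) - Real.log (1 + s))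
        - ∑ j, ut j * (Real.log (mu j + s) - Real.log (1 + s)) from funext hGs]
    have l1 : Tendsto (fun s => ∑ i, wt i * (Real.log (lam i + s) - Real.log (1 + s)))
        atTop (nhds 0) := by
      have := tendsto_finset_sum (Finset.univ : Finset ι)
        (fun i _ => (hquot (lam i) (hlam i)).const_mul (wt i))
      simpa using this
    have l2 : Tendsto (fun s => ∑ j, ut j * (Real.log (mu j + s) - Real.log (1 + s)))
        atTop (nhds 0) := by
      have := tendsto_finset_sum (Finset.univ : Finset κ)
        (fun j _ => (hquot (mu j) (hmu j)).const_mul (ut j))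
      simpa using this
    simpa using l1.sub l2
  have hG0 : G 0 ≤ 0 := by
    apply ge_of_tendsto hT
    filter_upwards [eventually_ge_atTop (0:ℝ)] with s hs
    exact mono (Set.mem_Ici.mpr le_rfl) (Set.mem_Ici.mpr hs) hs
  rw [hG] at hG0
  simp only [add_zero] at hG0
  linarith

section MlogMono
variable {n : Type*} [Fintype n] [DecidableEq n]

lemma isED_mlog {A V : Matrix n n ℂ} {g : n → ℝ} (h : IsED A V g) :
    IsED (mlog A) V (fun i => Real.log (g i)) :=
  ⟨h.hV1, h.hV2, mlog_eq_of_isED h⟩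

lemma mlog_psd_mono {M N : Matrix n n ℂ} (hM : M.PosDef) (hN : N.PosDef)
    (hMN : (N - M).PosSemidef) : (mlog N - mlog M).PosSemidef := by
  have edM := isED_canon hM.1
  have edN := isED_canon hN.1
  have edlogM := isED_mlog edM
  have edlogN := isED_mlog edN
  apply psd_of_herm_form ((edlogN.isHermitian).sub (edlogM.isHermitian))
  intro v
  have hexp : star v ⬝ᵥ (mlog N - mlog M) *ᵥ v
      = star v ⬝ᵥ (mlog N) *ᵥ v - star v ⬝ᵥ (mlog M) *ᵥ v := by
    rw [Matrix.sub_mulVec, dotProduct_sub]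
  rw [hexp, Complex.sub_re, sub_nonneg]
  have rfM := edlogM.re_form v
  have rfN := edlogN.re_form v
  rw [rfM, rfN]
  set U := (hM.1.eigenvectorUnitary : Matrix n n ℂ)
  set W := (hN.1.eigenvectorUnitary : Matrix n n ℂ)
  set wt : n → ℝ := fun i => Complex.normSq ((Uᴴ *ᵥ v) i)
  set ut : n → ℝ := fun j => Complex.normSq ((Wᴴ *ᵥ v) j)
  have key : ∑ i, wt i * Real.log (hM.1.eigenvalues i)
      ≤ ∑ j, ut j * Real.log (hN.1.eigenvalues j) := by
    apply sum_log_le_sum_log _ _ _ _ (fun i => hM.eigenvalues_pos i) (fun j => hN.eigenvalues_pos j)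
    · -- sums equal via identity matrix forms
      have edoneM : IsED (1 : Matrix n n ℂ) U (fun _ => 1) := by
        refine ⟨edM.hV1, edM.hV2, ?_⟩
        have : Matrix.diagonal (fun _ : n => ((1:ℝ):ℂ)) = 1 := by simp
        rw [this, mul_one, edM.hV1]
      have edoneN : IsED (1 : Matrix n n ℂ) W (fun _ => 1) := by
        refine ⟨edN.hV1, edN.hV2, ?_⟩
        have : Matrix.diagonal (fun _ : n => ((1:ℝ):ℂ)) = 1 := by simp
        rw [this, mul_one, edN.hV1]
      have e1 := edoneM.re_form v
      have e2 := edoneN.re_form v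
      rw [e1] at e2
      simpa using e2
    · intro s hs
      have hps : ∀ i, hM.1.eigenvalues i + s ≠ 0 := fun i => by
        have := hM.eigenvalues_pos i; positivity
      have hqs : ∀ j, hN.1.eigenvalues j + s ≠ 0 := fun j => by
        have := hN.eigenvalues_pos j; positivity
      have edMs := edM.add_smul_one s
      have edNs := edN.add_smul_one s
      have hMs : (M + (s:ℂ) • 1).PosDef := edMs.posDef (fun i => by
        have := hM.eigenvalues_pos i; positivity)
      have hNs : (N + (s:ℂ) • 1).PosDef := edNs.posDef (fun j => by
        have := hN.eigenvalues_pos j; positivity)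
      have hsub : ((N + (s:ℂ) • 1) - (M + (s:ℂ) • 1)).PosSemidef := by
        have : (N + (s:ℂ) • 1) - (M + (s:ℂ) • 1) = N - M := by abel
        rw [this]; exact hMN
      have hmono := inv_form_antitone hMs hNs hsub v
      have rMi := (edMs.inv hps).re_form v
      have rNi := (edNs.inv hqs).re_form v
      rw [rMi, rNi] at hmono
      calc ∑ j, ut j * (hN.1.eigenvalues j + s)⁻¹
          = ∑ j, (hN.1.eigenvalues j + s)⁻¹ * ut j := by
            refine Finset.sum_congr rfl fun j _ => by ring
        _ ≤ ∑ i, (hM.1.eigenvalues i + s)⁻¹ * wt i := hmono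
        _ = ∑ i, wt i * (hM.1.eigenvalues i + s)⁻¹ := by
            refine Finset.sum_congr rfl fun i _ => by ring
  calc ∑ i, Real.log (hM.1.eigenvalues i) * wt i
      = ∑ i, wt i * Real.log (hM.1.eigenvalues i) := by
        refine Finset.sum_congr rfl fun i _ => by ring
    _ ≤ ∑ j, ut j * Real.log (hN.1.eigenvalues j) := key
    _ = ∑ j, Real.log (hN.1.eigenvalues j) * ut j := by
        refine Finset.sum_congr rfl fun j _ => by ring

end MlogMono

section More
variable {n : Type*} [Fintype n] [DecidableEq n]

lemma isED_smul_one {V : Matrix n n ℂ} (hV1 : V * Vᴴ = 1) (hV2 : Vᴴ * V = 1) (β : ℝ) :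
    IsED ((β:ℂ) • 1) V (fun _ => β) := by
  refine ⟨hV1, hV2, ?_⟩
  rw [Matrix.smul_one_eq_diagonal]
  rw [show (Matrix.diagonal fun _ : n => (β:ℂ)) = ((β:ℂ) • 1 : Matrix n n ℂ) by
    rw [Matrix.smul_one_eq_diagonal]]
  rw [Matrix.mul_smul, Matrix.smul_mul, mul_one, hV1]

lemma IsED.sub' {A B V : Matrix n n ℂ} {g e : n → ℝ} (h1 : IsED A V g) (h2 : IsED B V e) :
    IsED (A - B) V (fun i => g i - e i) := by
  refine ⟨h1.hV1, h1.hV2, ?_⟩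
  have hd : Matrix.diagonal (fun i => ((g i - e i : ℝ) : ℂ))
      = Matrix.diagonal (fun i => (g i : ℂ)) - Matrix.diagonal (fun i => (e i : ℂ)) := by
    ext i j
    by_cases hij : i = j <;> simp [Matrix.diagonal_apply, hij]
  rw [hd, mul_sub, sub_mul, ← h1.hA, ← h2.hA]

lemma mlog_smul {σ : Matrix n n ℂ} (hσ : σ.PosDef) {γ : ℝ} (hγ : 0 < γ) :
    mlog ((γ:ℂ) • σ) = ((Real.log γ : ℝ) : ℂ) • 1 + mlog σ := by
  have ed := isED_canon hσ.1
  have edγ := ed.smul γ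
  rw [mlog_eq_of_isED edγ, mlog_eq_of_isED ed]
  set U := (hσ.1.eigenvectorUnitary : Matrix n n ℂ)
  have hδ : Matrix.diagonal (fun i => ((Real.log (γ * hσ.1.eigenvalues i) : ℝ) : ℂ))
      = ((Real.log γ : ℝ) : ℂ) • 1 + Matrix.diagonal
        (fun i => ((Real.log (hσ.1.eigenvalues i) : ℝ) : ℂ)) := by
    ext i j
    by_cases hij : i = j
    · subst hij
      simp only [Matrix.diagonal_apply_eq, Matrix.add_apply, Matrix.smul_apply,
        Matrix.one_apply_eq, smul_eq_mul, mul_one]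
      rw [Real.log_mul hγ.ne' (hσ.eigenvalues_pos i).ne']
      push_cast
      ring
    · simp [Matrix.diagonal_apply, hij, Matrix.one_apply]
  rw [hδ, mul_add, add_mul]
  congr 1
  rw [Matrix.mul_smul, Matrix.smul_mul, mul_one, ed.hV1]

lemma unitary_row_sums {S : Matrix n n ℂ} (h : S * Sᴴ = 1) (i : n) :
    ∑ j, Complex.normSq (S i j) = 1 := by
  have hc := congrArg (fun M => M i i) h
  simp only [Matrix.mul_apply, Matrix.conjTranspose_apply, Matrix.one_apply_eq] at hc
  have : ∀ j, S i j * star (S i j) = ((Complex.normSq (S i j) : ℝ) : ℂ) := by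
    intro j
    rw [Complex.star_def, Complex.mul_conj]
  rw [Finset.sum_congr rfl (fun j _ => this j)] at hc
  have : ((∑ j, Complex.normSq (S i j) : ℝ) : ℂ) = ((1:ℝ):ℂ) := by
    push_cast
    rw [hc]
  exact_mod_cast this

lemma unitary_col_sums {S : Matrix n n ℂ} (h : Sᴴ * S = 1) (j : n) :
    ∑ i, Complex.normSq (S i j) = 1 := by
  have h' : Sᴴ * (Sᴴ)ᴴ = 1 := by rwa [Matrix.conjTranspose_conjTranspose]
  have := unitary_row_sums h' j
  simp only [Matrix.conjTranspose_apply] at this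
  simpa [Complex.normSq_conj] using this

lemma trace_mul_ED_re {A V B W : Matrix n n ℂ} {g e : n → ℝ}
    (h1 : IsED A V g) (h2 : IsED B W e) :
    ((A * B).trace).re = ∑ i, ∑ j, g i * e j * Complex.normSq ((Vᴴ * W) i j) := by
  rw [trace_mul_ED h1 h2, Complex.re_sum]
  refine Finset.sum_congr rfl fun i _ => ?_
  rw [Complex.re_sum]
  refine Finset.sum_congr rfl fun j _ => ?_
  rw [← Complex.ofReal_mul, ← Complex.ofReal_mul, Complex.ofReal_re]

lemma klein_scalar {x y : ℝ} (hy : 0 ≤ y) (hx : 0 < x) :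
    0 ≤ y * Real.log y - y * Real.log x - y + x := by
  rcases eq_or_lt_of_le hy with h0 | hy'
  · rw [← h0]; simpa using hx.le
  · have hlog := Real.log_le_sub_one_of_pos (show 0 < x / y by positivity)
    rw [Real.log_div hx.ne' hy'.ne'] at hlog
    have := mul_le_mul_of_nonneg_left hlog hy'.le
    rw [mul_sub] at this
    have hxy : y * (x / y) = x := by field_simp
    nlinarith

lemma klein_ineq {X Y : Matrix n n ℂ} (hX : X.PosDef) (hY : Y.PosDef) :
    (Y * mlog X).trace.re + Y.trace.re ≤ (Y * mlog Y).trace.re + X.trace.re := by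
  have edY := isED_canon hY.1
  have edX := isED_canon hX.1
  have edlogY := isED_mlog edY
  have edlogX := isED_mlog edX
  set V := (hY.1.eigenvectorUnitary : Matrix n n ℂ)
  set W := (hX.1.eigenvectorUnitary : Matrix n n ℂ)
  set S := Vᴴ * W with hS
  have hSS : S * Sᴴ = 1 := by
    rw [hS, Matrix.conjTranspose_mul, Matrix.conjTranspose_conjTranspose]
    calc Vᴴ * W * (Wᴴ * V) = Vᴴ * (W * Wᴴ) * V := by simp only [mul_assoc]
      _ = 1 := by rw [edX.hV1, mul_one, edY.hV2]
  have hSS' : Sᴴ * S = 1 := by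
    rw [hS, Matrix.conjTranspose_mul, Matrix.conjTranspose_conjTranspose]
    calc Wᴴ * V * (Vᴴ * W) = Wᴴ * (V * Vᴴ) * W := by simp only [mul_assoc]
      _ = 1 := by rw [edY.hV1, mul_one, edX.hV2]
  set y := hY.1.eigenvalues
  set x := hX.1.eigenvalues
  set c : n → n → ℝ := fun i j => Complex.normSq (S i j) with hc
  -- the four terms
  have t1 : (Y * mlog X).trace.re = ∑ i, ∑ j, y i * Real.log (x j) * c i j :=
    trace_mul_ED_re edY edlogX
  have t2 : (Y * mlog Y).trace.re = ∑ i, y i * Real.log (y i) := by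
    rw [trace_mul_ED_re edY edlogY]
    refine Finset.sum_congr rfl fun i _ => ?_
    rw [Finset.sum_eq_single i]
    · rw [edY.hV2]; simp
    · intro j _ hji
      rw [edY.hV2]
      simp [Matrix.one_apply, Ne.symm hji]
    · intro h; exact absurd (Finset.mem_univ i) h
  have t3 : Y.trace.re = ∑ i, y i := by
    rw [edY.trace]
    rw [Complex.re_sum]
    exact Finset.sum_congr rfl fun i _ => Complex.ofReal_re _
  have t4 : X.trace.re = ∑ j, x j := by
    rw [edX.trace, Complex.re_sum]
    exact Finset.sum_congr rfl fun j _ => Complex.ofReal_re _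
  have hrow : ∀ i, ∑ j, c i j = 1 := fun i => unitary_row_sums hSS i
  have hcol : ∀ j, ∑ i, c i j = 1 := fun j => unitary_col_sums hSS' j
  have t2' : (Y * mlog Y).trace.re = ∑ i, ∑ j, y i * Real.log (y i) * c i j := by
    rw [t2]
    refine Finset.sum_congr rfl fun i _ => ?_
    rw [← Finset.mul_sum, hrow i, mul_one]
  have t3' : Y.trace.re = ∑ i, ∑ j, y i * c i j := by
    rw [t3]
    refine Finset.sum_congr rfl fun i _ => ?_
    rw [← Finset.mul_sum, hrow i, mul_one]
  have t4' : X.trace.re = ∑ i, ∑ j, x j * c i j := by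
    rw [t4, Finset.sum_comm]
    refine Finset.sum_congr rfl fun j _ => ?_
    rw [← Finset.mul_sum, hcol j, mul_one]
  rw [t1, t2', t3', t4']
  rw [← sub_nonneg]
  have hcomb : (∑ i, ∑ j, y i * Real.log (y i) * c i j) + (∑ i, ∑ j, x j * c i j)
      - ((∑ i, ∑ j, y i * Real.log (x j) * c i j) + (∑ i, ∑ j, y i * c i j))
      = ∑ i, ∑ j, (y i * Real.log (y i) - y i * Real.log (x j) - y i + x j) * c i j := by
    rw [← Finset.sum_add_distrib, ← Finset.sum_add_distrib, ← Finset.sum_sub_distrib]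
    refine Finset.sum_congr rfl fun i _ => ?_
    rw [← Finset.sum_add_distrib, ← Finset.sum_add_distrib, ← Finset.sum_sub_distrib]
    refine Finset.sum_congr rfl fun j _ => ?_
    ring
  rw [hcomb]
  exact Finset.sum_nonneg fun i _ => Finset.sum_nonneg fun j _ =>
    mul_nonneg (klein_scalar (hY.eigenvalues_pos i).le (hX.eigenvalues_pos j))
      (Complex.normSq_nonneg _)

end More

section Helpers
variable {n : Type*} [Fintype n] [DecidableEq n]

lemma psd_smul_real {A : Matrix n n ℂ} (hA : A.PosSemidef) {t : ℝ} (ht : 0 ≤ t) :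
    (((t:ℝ):ℂ) • A).PosSemidef := by
  refine Matrix.PosSemidef.of_dotProduct_mulVec_nonneg ?_ ?_
  · rw [Matrix.IsHermitian, Matrix.conjTranspose_smul, hA.1.eq]
    congr 1
    simp [Complex.star_def, Complex.conj_ofReal]
  · intro v
    rw [Matrix.smul_mulVec, dotProduct_smul]
    have h1 : (0:ℂ) ≤ ((t:ℝ):ℂ) := Complex.zero_le_real.mpr ht
    exact mul_nonneg h1 (hA.dotProduct_mulVec_nonneg v)

lemma posdef_smul_real {A : Matrix n n ℂ} (hA : A.PosDef) {t : ℝ} (ht : 0 < t) :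
    (((t:ℝ):ℂ) • A).PosDef := by
  refine Matrix.PosDef.of_dotProduct_mulVec_pos (psd_smul_real hA.posSemidef ht.le).1 fun v hv => ?_
  rw [Matrix.smul_mulVec, dotProduct_smul]
  have h1 : (0:ℂ) < ((t:ℝ):ℂ) := by
    rw [Complex.zero_lt_real]; exact ht
  exact mul_pos h1 (hA.dotProduct_mulVec_pos hv)

lemma trace_mul_sub_re (A X Y : Matrix n n ℂ) :
    ((A * (X - Y)).trace).re = ((A * X).trace).re - ((A * Y).trace).re := by
  rw [mul_sub, Matrix.trace_sub, Complex.sub_re]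

lemma trace_sub_mul_re (A B X : Matrix n n ℂ) :
    (((A - B) * X).trace).re = ((A * X).trace).re - ((B * X).trace).re := by
  rw [Matrix.sub_mul, Matrix.trace_sub, Complex.sub_re]

lemma trace_mul_mono_right {A X Y : Matrix n n ℂ} (hA : A.PosSemidef)
    (hXY : (Y - X).PosSemidef) : ((A * X).trace).re ≤ ((A * Y).trace).re := by
  have := trace_mul_re_nonneg hA hXY
  rw [trace_mul_sub_re] at this
  linarith

lemma trace_mul_mono_left {X A B : Matrix n n ℂ} (hX : X.PosSemidef)
    (hAB : (B - A).PosSemidef) : ((A * X).trace).re ≤ ((B * X).trace).re := by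
  have := trace_mul_re_nonneg hAB hX
  rw [trace_sub_mul_re] at this
  linarith

lemma trace_smul_mul_re (A X : Matrix n n ℂ) (t : ℝ) :
    (((((t:ℝ):ℂ) • A) * X).trace).re = t * ((A * X).trace).re := by
  rw [Matrix.smul_mul, Matrix.trace_smul]
  exact Complex.re_ofReal_mul _ _

lemma trace_mul_smul_one_add_re (A Z : Matrix n n ℂ) (γ : ℝ) :
    ((A * ((((γ:ℝ):ℂ) • 1) + Z)).trace).re = γ * (A.trace).re + ((A * Z).trace).re := by
  rw [mul_add, Matrix.trace_add, Complex.add_re]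
  congr 1
  rw [Matrix.mul_smul, mul_one, Matrix.trace_smul]
  exact Complex.re_ofReal_mul _ _

lemma trace_mul_ED_re_same {A B V : Matrix n n ℂ} {g e : n → ℝ}
    (h1 : IsED A V g) (h2 : IsED B V e) :
    ((A * B).trace).re = ∑ i, g i * e i := by
  rw [trace_mul_ED_re h1 h2]
  refine Finset.sum_congr rfl fun i _ => ?_
  rw [Finset.sum_eq_single i]
  · rw [h1.hV2]; simp
  · intro j _ hji
    rw [h1.hV2]
    simp [Matrix.one_apply, Ne.symm hji]
  · intro h; exact absurd (Finset.mem_univ i) h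

/-- Jordan decomposition bundle -/
lemma jordan {Δ : Matrix n n ℂ} (hΔ : Δ.IsHermitian) :
    ∃ P : Matrix n n ℂ, P.PosSemidef ∧ (P - Δ).PosSemidef ∧
      P.trace.re = ((((Matrix.posSemidef_conjTranspose_mul_self Δ).sqrt.trace).re
        + Δ.trace.re) / 2) ∧
      (((P.trace.re : ℝ):ℂ) • 1 - P).PosSemidef := by
  have ed := isED_canon hΔ
  set V := (hΔ.eigenvectorUnitary : Matrix n n ℂ)
  set δ := hΔ.eigenvalues
  set P := V * Matrix.diagonal (fun i => ((max (δ i) 0 : ℝ) : ℂ)) * Vᴴ with hPdef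
  have edP : IsED P V (fun i => max (δ i) 0) := ⟨ed.hV1, ed.hV2, rfl⟩
  have hPpsd : P.PosSemidef := edP.posSemidef (fun i => le_max_right _ _)
  have edQ : IsED (P - Δ) V (fun i => max (δ i) 0 - δ i) := edP.sub' ed
  have hQpsd : (P - Δ).PosSemidef := edQ.posSemidef (fun i => by
    simp [sub_nonneg, le_max_left])
  set R := V * Matrix.diagonal (fun i => ((|δ i| : ℝ) : ℂ)) * Vᴴ with hRdef
  have edR : IsED R V (fun i => |δ i|) := ⟨ed.hV1, ed.hV2, rfl⟩
  have hRsq : R ^ 2 = Δᴴ * Δ := by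
    rw [pow_two, hΔ.eq, hRdef, IsED.sandwich_mul ed.hV2, Matrix.diagonal_mul_diagonal]
    conv_rhs => rw [ed.hA, IsED.sandwich_mul ed.hV2, Matrix.diagonal_mul_diagonal]
    have habs : (fun i => ((|δ i| : ℝ):ℂ) * ((|δ i| : ℝ):ℂ))
        = (fun i => ((δ i : ℝ):ℂ) * ((δ i : ℝ):ℂ)) := by
      funext i
      rw [← Complex.ofReal_mul, ← Complex.ofReal_mul, abs_mul_abs_self]
    rw [habs]
  have hR : R = (Matrix.posSemidef_conjTranspose_mul_self Δ).sqrt := by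
    have hS := Matrix.posSemidef_conjTranspose_mul_self Δ
    have edsq : IsED (Δᴴ * Δ) V (fun i => |δ i| * |δ i|) := ⟨ed.hV1, ed.hV2, by
      rw [← hRsq, pow_two, edR.hA, IsED.sandwich_mul ed.hV2, Matrix.diagonal_mul_diagonal]
      simp only [Complex.ofReal_mul]⟩
    have e1 := fun_ED_indep edsq (isED_canon hS.1) Real.sqrt
    have hf : (fun i => ((Real.sqrt (|δ i| * |δ i|) : ℝ) : ℂ)) = fun i => ((|δ i| : ℝ) : ℂ) := by
      funext i
      rw [Real.sqrt_mul_self (abs_nonneg _)]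
    rw [hf] at e1
    rw [edR.hA, e1]
    exact ((isED_sqrt hS).hA).symm
  have htr : P.trace.re = ∑ i, max (δ i) 0 := by
    rw [edP.trace, Complex.re_sum]
    exact Finset.sum_congr rfl fun i _ => Complex.ofReal_re _
  have htrR : ((Matrix.posSemidef_conjTranspose_mul_self Δ).sqrt.trace).re = ∑ i, |δ i| := by
    rw [← hR, edR.trace, Complex.re_sum]
    exact Finset.sum_congr rfl fun i _ => Complex.ofReal_re _
  have htrΔ : Δ.trace.re = ∑ i, δ i := by
    rw [ed.trace, Complex.re_sum]
    exact Finset.sum_congr rfl fun i _ => Complex.ofReal_re _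
  refine ⟨P, hPpsd, hQpsd, ?_, ?_⟩
  · rw [htr, htrR, htrΔ, ← Finset.sum_add_distrib, Finset.sum_div]
    refine Finset.sum_congr rfl fun i _ => ?_
    rcases le_total 0 (δ i) with h | h
    · rw [max_eq_left h, abs_of_nonneg h]; ring
    · rw [max_eq_right h, abs_of_nonpos h]; ring
  · have edsub := (isED_smul_one ed.hV1 ed.hV2 (P.trace.re)).sub' edP
    refine edsub.posSemidef fun i => ?_
    rw [htr, sub_nonneg]
    exact Finset.single_le_sum (f := fun i => max (δ i) 0)
      (fun j _ => le_max_right _ _) (Finset.mem_univ i)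

lemma stepD_term {la lb a b d : ℝ} (hk : 0 ≤ b * lb - b * la - b + a) (hd : b - a = d) :
    d * lb ≤ (b * lb + d * lb) - (a * la + d * la) - d := by
  have hexp : b * la = a * la + d * la := by linear_combination la * hd
  linarith

lemma stepD {c : ℝ} (hc : 0 < c) {m : ℕ} (hm : 0 < m) :
    (c / m) * ∑ k ∈ Finset.range m, Real.log (1 + (k + 1) * c / m)
      ≤ (1 + c) * Real.log (1 + c) - c + (c / m) * Real.log (1 + c) := by
  have hm' : (0:ℝ) < m := by exact_mod_cast hm
  set a : ℕ → ℝ := fun k => 1 + k * c / m with ha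
  have hapos : ∀ k, 0 < a k := fun k => by
    have : (0:ℝ) ≤ k * c / m := by positivity
    simp only [ha]; linarith
  set G : ℕ → ℝ := fun k => a k * Real.log (a k) + (c / m) * Real.log (a k) with hG
  have hdiff : ∀ k : ℕ, a (k + 1) - a k = c / m := by
    intro k
    simp only [ha]
    push_cast
    field_simp
    ring
  have hstep : ∀ k : ℕ, (c / m) * Real.log (a (k + 1)) ≤ G (k + 1) - G k - c / m := by
    intro k
    have hk := klein_scalar (hapos (k+1)).le (hapos k)
    exact stepD_term hk (hdiff k)
  have hsum := Finset.sum_le_sum (fun k (_ : k ∈ Finset.range m) => hstep k)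
  rw [← Finset.mul_sum, Finset.sum_sub_distrib, Finset.sum_range_sub G m] at hsum
  simp only [Finset.sum_const, Finset.card_range, nsmul_eq_mul] at hsum
  have ham : a m = 1 + c := by
    simp only [ha]; field_simp
  have ha0 : a 0 = 1 := by simp [ha]
  have hGm : G m = (1 + c) * Real.log (1 + c) + (c/m) * Real.log (1 + c) := by
    show a m * Real.log (a m) + (c / m) * Real.log (a m) = _
    rw [ham]
  have hG0 : G 0 = 0 := by
    show a 0 * Real.log (a 0) + (c / m) * Real.log (a 0) = 0
    rw [ha0]
    simp
  rw [hGm, hG0] at hsum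
  have hmm : (m:ℝ) * (c / m) = c := by field_simp
  calc (c / m) * ∑ k ∈ Finset.range m, Real.log (1 + (k + 1) * c / m)
      = (c / m) * ∑ k ∈ Finset.range m, Real.log (a (k + 1)) := by
        congr 1
        refine Finset.sum_congr rfl fun k _ => ?_
        simp only [ha]
        push_cast
        ring_nf
    _ ≤ (1 + c) * Real.log (1 + c) + (c/m) * Real.log (1 + c) - 0 - m * (c/m) := hsum
    _ = (1 + c) * Real.log (1 + c) - c + (c/m) * Real.log (1 + c) := by
        rw [hmm]; ring

end Helpers

section Final
variable {n : Type*} [Fintype n] [DecidableEq n]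

lemma smul_sub_combine (σ P : Matrix n n ℂ) (t c : ℝ) :
    ((1 + t * c : ℝ):ℂ) • σ - (σ + ((t:ℝ):ℂ) • P) = ((t:ℝ):ℂ) • (((c:ℝ):ℂ) • σ - P) := by
  rw [smul_sub, smul_smul, ← Complex.ofReal_mul]
  have h1 : ((1 + t * c : ℝ):ℂ) = 1 + ((t * c : ℝ):ℂ) := by push_cast; ring
  rw [h1, add_smul, one_smul]
  abel

theorem main_bound {d : ℕ} (ρ σ : Matrix (Fin d) (Fin d) ℂ)
    (hρ : ρ.PosSemidef) (hρ1 : ρ.trace = 1)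
    (hσ : σ.PosDef) (hσ1 : σ.trace = 1)
    (β T : ℝ)
    (hβ_eig : ∀ i, β ≤ hσ.1.eigenvalues i) (hβpos : 0 < β)
    (hT : T = (((Matrix.posSemidef_conjTranspose_mul_self (ρ - σ)).sqrt.trace).re) / 2)
    (hTβ : β ≤ T) :
    qRelEnt ρ σ ≤ (β + T) * Real.log (1 + T / β) := by
  have hσH : σ.IsHermitian := hσ.1
  have hρH : ρ.IsHermitian := hρ.1
  have edσ := isED_canon hσH
  have hσβ : (σ - ((β:ℝ):ℂ) • 1).PosSemidef := by
    have hed := edσ.sub' (isED_smul_one edσ.hV1 edσ.hV2 β)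
    exact hed.posSemidef (fun i => sub_nonneg.mpr (hβ_eig i))
  have hΔH : (ρ - σ).IsHermitian := hρH.sub hσH
  obtain ⟨P, hP, hQ, hPtr, hPT⟩ := jordan hΔH
  have hΔtr : (ρ - σ).trace.re = 0 := by
    rw [Matrix.trace_sub, hρ1, hσ1]; simp
  have hTP : P.trace.re = T := by rw [hPtr, hΔtr, hT]; ring
  have hTpos : 0 < T := lt_of_lt_of_le hβpos hTβ
  set c : ℝ := T / β with hc
  have hcpos : 0 < c := div_pos hTpos hβpos
  have hβc : β * c = T := by rw [hc]; field_simp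
  have hcσP : (((c:ℝ):ℂ) • σ - P).PosSemidef := by
    have h1 : (((c:ℝ):ℂ) • (σ - ((β:ℝ):ℂ) • 1)).PosSemidef := psd_smul_real hσβ hcpos.le
    have h2 := hPT
    rw [hTP] at h2
    have e : ((c:ℝ):ℂ) • σ - P = ((c:ℝ):ℂ) • (σ - ((β:ℝ):ℂ) • 1) + (((T:ℝ):ℂ) • 1 - P) := by
      rw [smul_sub, smul_smul, ← Complex.ofReal_mul, mul_comm c β, hβc]
      abel
    rw [e]; exact h1.add h2
  set SP : Matrix (Fin d) (Fin d) ℂ := σ + P with hSP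
  have hSPpd : SP.PosDef := hσ.add_posSemidef hP
  have hSPρ : (SP - ρ).PosSemidef := by
    have e : SP - ρ = P - (ρ - σ) := by rw [hSP]; abel
    rw [e]; exact hQ
  have hSPσ : (SP - σ).PosSemidef := by
    have e : SP - σ = P := by rw [hSP]; abel
    rw [e]; exact hP
  have hSPβ : (SP - ((β:ℝ):ℂ) • 1).PosSemidef := by
    have e : SP - ((β:ℝ):ℂ) • 1 = (σ - ((β:ℝ):ℂ) • 1) + P := by rw [hSP]; abel
    rw [e]; exact hσβ.add hP
  have hmlogSPσ : (mlog SP - mlog σ).PosSemidef := mlog_psd_mono hσ hSPpd hSPσ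
  have hTrρ : ρ.trace.re = 1 := by rw [hρ1]; simp
  set K : ℝ := ((SP * (mlog SP - mlog σ)).trace).re with hK
  -- STEP A
  have stepA : ∀ η : ℝ, 0 < η → qRelEnt ρ σ ≤ K + η := by
    intro η hη
    set ε : ℝ := β * (Real.exp η - 1) with hε
    have hexpη : 1 < Real.exp η := by
      calc (1:ℝ) = Real.exp 0 := by rw [Real.exp_zero]
        _ < Real.exp η := Real.exp_lt_exp.mpr hη
    have hεpos : 0 < ε := mul_pos hβpos (by linarith)
    have hlogγ : Real.log (1 + ε / β) = η := by
      rw [hε]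
      have h9 : 1 + (β * (Real.exp η - 1)) / β = Real.exp η := by
          rw [mul_comm β, mul_div_assoc, div_self hβpos.ne', mul_one]; ring
      rw [h9, Real.log_exp]
    have hγpos : 0 < 1 + ε / β := by positivity
    have edρ := isED_canon hρH
    have edρε := edρ.add_smul_one ε
    have hρεpd : (ρ + ((ε:ℝ):ℂ) • 1).PosDef := edρε.posDef (fun i => by
      have := hρ.eigenvalues_nonneg i
      exact add_pos_of_nonneg_of_pos this hεpos)
    have hSPε : (SP + ((ε:ℝ):ℂ) • 1).PosDef :=
      hSPpd.add_posSemidef (psd_smul_real Matrix.PosSemidef.one hεpos.le)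
    have a1 : ((ρ * mlog ρ).trace).re ≤ ((ρ * mlog (ρ + ((ε:ℝ):ℂ) • 1)).trace).re := by
      rw [trace_mul_ED_re_same edρ (isED_mlog edρ),
          trace_mul_ED_re_same edρ (isED_mlog edρε)]
      refine Finset.sum_le_sum fun i _ => ?_
      have hp := hρ.eigenvalues_nonneg i
      rcases eq_or_lt_of_le hp with h0 | hpos
      · rw [← h0]; simp
      · refine mul_le_mul_of_nonneg_left ?_ hp
        exact Real.log_le_log hpos (by linarith)
    have a2 : ((ρ * mlog (ρ + ((ε:ℝ):ℂ) • 1)).trace).re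
        ≤ ((ρ * mlog (SP + ((ε:ℝ):ℂ) • 1)).trace).re := by
      refine trace_mul_mono_right hρ (mlog_psd_mono hρεpd hSPε ?_)
      have e : (SP + ((ε:ℝ):ℂ) • 1) - (ρ + ((ε:ℝ):ℂ) • 1) = SP - ρ := by abel
      rw [e]; exact hSPρ
    have hγSP : (((1 + ε / β : ℝ):ℂ) • SP).PosDef := posdef_smul_real hSPpd hγpos
    have a3 : ((ρ * mlog (SP + ((ε:ℝ):ℂ) • 1)).trace).re ≤ ((ρ * mlog SP).trace).re + η := by
      have hpsd : ((((1 + ε / β : ℝ):ℂ) • SP) - (SP + ((ε:ℝ):ℂ) • 1)).PosSemidef := by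
        have e : (((1 + ε / β : ℝ):ℂ) • SP) - (SP + ((ε:ℝ):ℂ) • 1)
            = ((ε / β : ℝ):ℂ) • (SP - ((β:ℝ):ℂ) • 1) := by
          have h1 : ((1 + ε / β : ℝ):ℂ) = 1 + ((ε / β : ℝ):ℂ) := by push_cast; ring
          have h2 : ((ε / β : ℝ):ℂ) • (((β:ℝ):ℂ) • (1 : Matrix (Fin d) (Fin d) ℂ))
              = ((ε:ℝ):ℂ) • 1 := by
            rw [smul_smul, ← Complex.ofReal_mul, div_mul_cancel₀ _ hβpos.ne']
          rw [h1, add_smul, one_smul, smul_sub, h2]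
          abel
        rw [e]
        exact psd_smul_real hSPβ (by positivity)
      have hmono := mlog_psd_mono hSPε hγSP hpsd
      have h5 := trace_mul_mono_right hρ hmono
      rw [mlog_smul hSPpd hγpos, trace_mul_smul_one_add_re, hTrρ, hlogγ] at h5
      linarith
    have hq : qRelEnt ρ σ = ((ρ * mlog ρ).trace).re - ((ρ * mlog σ).trace).re := by
      rw [qRelEnt, trace_mul_sub_re]
    have a4 : ((ρ * (mlog SP - mlog σ)).trace).re ≤ K := by
      rw [hK]
      exact trace_mul_mono_left hmlogSPσ hSPρ
    have a5 : ((ρ * (mlog SP - mlog σ)).trace).re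
        = ((ρ * mlog SP).trace).re - ((ρ * mlog σ).trace).re := trace_mul_sub_re ρ _ _
    rw [hq]
    linarith
  -- STEP B
  have stepB : ∀ m : ℕ, 0 < m →
      K ≤ (β + T) * Real.log (1 + c) + (T/(m:ℝ)) * Real.log (1 + c) := by
    intro m hm
    have hm' : (0:ℝ) < m := by exact_mod_cast hm
    set B : ℕ → Matrix (Fin d) (Fin d) ℂ :=
      fun k => σ + ((((k:ℝ)/(m:ℝ) : ℝ)):ℂ) • P with hB
    have hBpd : ∀ k : ℕ, (B k).PosDef := fun k =>
      hσ.add_posSemidef (psd_smul_real hP (by positivity))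
    have hB0 : B 0 = σ := by simp [hB]
    have hBm : B m = SP := by
      simp only [hB]
      rw [div_self hm'.ne', hSP]
      norm_num
    have hBdiff : ∀ k : ℕ, B (k+1) - B k = (((1/(m:ℝ) : ℝ)):ℂ) • P := by
      intro k
      simp only [hB]
      rw [add_sub_add_left_eq_sub, ← sub_smul]
      congr 2
      push_cast
      ring
    have hφstep : ∀ k : ℕ,
        ((B (k+1) * mlog (B (k+1))).trace).re - ((B k * mlog (B k)).trace).re
          ≤ (1/(m:ℝ)) * ((P * mlog (B (k+1))).trace).re + (1/(m:ℝ)) * T := by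
      intro k
      have hkl := klein_ineq (hBpd (k+1)) (hBpd k)
      have e1 : ((B (k+1) * mlog (B (k+1))).trace).re - ((B k * mlog (B (k+1))).trace).re
          = (1/(m:ℝ)) * ((P * mlog (B (k+1))).trace).re := by
        rw [← trace_sub_mul_re, hBdiff k, trace_smul_mul_re]
      have e2 : (B (k+1)).trace.re - (B k).trace.re = (1/(m:ℝ)) * T := by
        have h7 : (B (k+1)).trace.re - (B k).trace.re
            = (((((1/(m:ℝ)):ℝ)):ℂ) • P).trace.re := by
          rw [← Complex.sub_re, ← Matrix.trace_sub, hBdiff k]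
        rw [h7, Matrix.trace_smul, smul_eq_mul, Complex.re_ofReal_mul, hTP]
      linarith
    have hCk : ∀ k : ℕ, ((P * mlog (B (k+1))).trace).re
        ≤ ((P * mlog σ).trace).re + T * Real.log (1 + ((k:ℝ)+1) * c / (m:ℝ)) := by
      intro k
      set t : ℝ := (((k+1 : ℕ)):ℝ) / (m:ℝ) with ht
      have htpos : 0 ≤ t := by positivity
      have htc : 0 ≤ t * c := mul_nonneg htpos hcpos.le
      have hγpos : (0:ℝ) < 1 + t * c := by linarith
      have hBk1 : B (k+1) = σ + ((t:ℝ):ℂ) • P := by simp only [hB, ht]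
      have hpsd : (((((1 + t * c : ℝ)):ℂ)) • σ - B (k+1)).PosSemidef := by
        rw [hBk1, smul_sub_combine σ P t c]
        exact psd_smul_real hcσP htpos
      have hγσpd : ((((1 + t*c : ℝ)):ℂ) • σ).PosDef := posdef_smul_real hσ hγpos
      have hmono := trace_mul_mono_right hP (mlog_psd_mono (hBpd (k+1)) hγσpd hpsd)
      rw [mlog_smul hσ hγpos, trace_mul_smul_one_add_re, hTP] at hmono
      have harg : 1 + t * c = 1 + ((k:ℝ)+1) * c / (m:ℝ) := by
        rw [ht]; push_cast; ring
      rw [harg] at hmono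
      linarith
    have hφC : ∀ k ∈ Finset.range m,
        ((B (k+1) * mlog (B (k+1))).trace).re - ((B k * mlog (B k)).trace).re
          ≤ (1/(m:ℝ)) * ((P * mlog σ).trace).re
            + (T/(m:ℝ)) * Real.log (1 + ((k:ℝ)+1) * c / (m:ℝ)) + (1/(m:ℝ)) * T := by
      intro k _
      have h1 := hφstep k
      have h2 := hCk k
      have h1m : (0:ℝ) ≤ 1/(m:ℝ) := by positivity
      have h3 := mul_le_mul_of_nonneg_left h2 h1m
      have h4 : (1/(m:ℝ)) * (((P * mlog σ).trace).re
          + T * Real.log (1 + ((k:ℝ)+1) * c / (m:ℝ)))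
          = (1/(m:ℝ)) * ((P * mlog σ).trace).re
            + (T/(m:ℝ)) * Real.log (1 + ((k:ℝ)+1) * c / (m:ℝ)) := by ring
      linarith
    have htel := Finset.sum_le_sum hφC
    rw [Finset.sum_range_sub (fun k => ((B k * mlog (B k)).trace).re) m] at htel
    simp only [hB0, hBm] at htel
    have hRHS : ∑ k ∈ Finset.range m, ((1/(m:ℝ)) * ((P * mlog σ).trace).re
          + (T/(m:ℝ)) * Real.log (1 + ((k:ℝ)+1) * c / (m:ℝ)) + (1/(m:ℝ)) * T)
        = ((P * mlog σ).trace).re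
          + (T/(m:ℝ)) * (∑ k ∈ Finset.range m, Real.log (1 + ((k:ℝ)+1) * c / (m:ℝ))) + T := by
      rw [Finset.sum_add_distrib, Finset.sum_add_distrib, Finset.sum_const,
        Finset.card_range, nsmul_eq_mul, Finset.sum_const, Finset.card_range,
        nsmul_eq_mul, ← Finset.mul_sum]
      simp only [← mul_assoc, mul_one_div_cancel hm'.ne', one_mul]
    rw [hRHS] at htel
    have hKsplit : K = ((SP * mlog SP).trace).re - ((σ * mlog σ).trace).re
        - ((P * mlog σ).trace).re := by
      rw [hK, trace_mul_sub_re]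
      have h6 : ((SP * mlog σ).trace).re
          = ((σ * mlog σ).trace).re + ((P * mlog σ).trace).re := by
        rw [hSP, Matrix.add_mul, Matrix.trace_add, Complex.add_re]
      linarith
    have hDb := stepD hcpos hm
    have hβD := mul_le_mul_of_nonneg_left hDb hβpos.le
    have h8 : β * ((1 + c) * Real.log (1 + c) - c + (c/(m:ℝ)) * Real.log (1 + c))
        = (β + T) * Real.log (1 + c) - T + (T/(m:ℝ)) * Real.log (1 + c) := by
      rw [← hβc]; ring
    have h9 : β * ((c/(m:ℝ)) * ∑ k ∈ Finset.range m, Real.log (1 + ((k:ℝ)+1) * c / (m:ℝ)))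
        = (T/(m:ℝ)) * ∑ k ∈ Finset.range m, Real.log (1 + ((k:ℝ)+1) * c / (m:ℝ)) := by
      rw [← hβc]; ring
    have h10 : (c/(m:ℝ)) * ∑ k ∈ Finset.range m, Real.log (1 + ((k:ℝ)+1) * c / (m:ℝ))
        = (c/(m:ℝ)) * ∑ k ∈ Finset.range m, Real.log (1 + ((k:ℝ)+1) * c / (m:ℝ)) := rfl
    -- match stepD's sum format
    have hmatch : ∑ k ∈ Finset.range m, Real.log (1 + ((k:ℝ)+1) * c / (m:ℝ))
        = ∑ k ∈ Finset.range m, Real.log (1 + ((k:ℕ)+1) * c / (m:ℝ)) := by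
      refine Finset.sum_congr rfl fun k _ => ?_
      push_cast
      ring_nf
    rw [hmatch] at htel h9
    rw [hmatch] at hβD
    linarith
  -- FINAL
  have hL0 : 0 ≤ Real.log (1 + c) := Real.log_nonneg (by linarith)
  have final : ∀ ε : ℝ, 0 < ε → qRelEnt ρ σ ≤ (β + T) * Real.log (1 + c) + ε := by
    intro ε hε
    obtain ⟨m, hm1, hm2⟩ : ∃ m : ℕ, 0 < m ∧ (T/(m:ℝ)) * Real.log (1 + c) ≤ ε/2 := by
      obtain ⟨m, hm⟩ := exists_nat_gt (T * Real.log (1+c) / (ε/2))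
      refine ⟨m + 1, Nat.succ_pos m, ?_⟩
      have hm'' : (0:ℝ) < ((m+1 : ℕ):ℝ) := by positivity
      have h9 : T * Real.log (1+c) / (ε/2) < ((m+1:ℕ):ℝ) := by
        push_cast at hm ⊢
        linarith
      rw [div_lt_iff₀ (by linarith : (0:ℝ) < ε/2)] at h9
      have h11 : (T/((m+1:ℕ):ℝ)) * Real.log (1 + c)
          = (T * Real.log (1+c)) / ((m+1:ℕ):ℝ) := by ring
      rw [h11, div_le_iff₀ hm'']
      nlinarith
    have hA := stepA (ε/2) (by linarith)
    have hBb := stepB m hm1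
    linarith
  exact le_of_forall_pos_le_add final

end Final

/-- Upper bound on the relative entropy when `T ≥ β`. -/
theorem relEntropy_le_of_beta_le_T {d : ℕ} (ρ σ : Matrix (Fin d) (Fin d) ℂ)
    (hρ : ρ.PosSemidef) (hρ1 : ρ.trace = 1)
    (hσ : σ.PosDef) (hσ1 : σ.trace = 1)
    (hsupp : LinearMap.range ρ.mulVecLin ≤ LinearMap.range σ.mulVecLin)
    (β T : ℝ) (hβ : β = lamMin σ)
    (hT : T = traceNorm (ρ - σ) / 2) (hTβ : β ≤ T) :
    qRelEnt ρ σ ≤ (β + T) * Real.log (1 + T / β) := by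
  have hσH : σ.IsHermitian := hσ.1
  have hne : Nonempty (Fin d) := by
    by_contra h
    rw [not_nonempty_iff] at h
    have h0 : σ.trace = 0 := by
      rw [Matrix.trace]
      simp
    rw [hσ1] at h0
    exact one_ne_zero h0
  have hβ_eig : ∀ i, β ≤ hσ.1.eigenvalues i := fun i => by
    rw [hβ, lamMin, dif_pos hσH]
    exact ciInf_le (Set.Finite.bddBelow (Set.finite_range _)) i
  have hβpos : 0 < β := by
    obtain ⟨i0, -, hmin⟩ := Finset.exists_min_image Finset.univ hσH.eigenvalues
      ⟨Classical.arbitrary _, Finset.mem_univ _⟩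
    have h1 : hσH.eigenvalues i0 ≤ β := by
      rw [hβ, lamMin, dif_pos hσH]
      exact le_ciInf (fun i => hmin i (Finset.mem_univ i))
    exact lt_of_lt_of_le (hσ.eigenvalues_pos i0) h1
  rw [traceNorm] at hT
  exact main_bound ρ σ hρ hρ1 hσ hσ1 β T hβ_eig hβpos hT hTβ
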